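/- Let G be a non-bipartite vertex-transitive k-regular simple graph. If the odd girth of G is at least 5, then the independence number of G satisfies α(G) ≤ |V(G)|/2 − k/4; if the odd girth of G equals 3, then α(G) ≤ |V(G)|/3. -/

import Mathlib

open SimpleGraph

section Defs

variable {V : Type*}

/-- A simple graph is vertex-transitive if any vertex can be mapped to any other
by a graph automorphism. -/
def VertexTransitive (G : SimpleGraph V) : Prop :=
  ∀ x y : V, ∃ φ : G ≃g G, φ x = y

/-- A graph is `p`-factor-critical if the removal of any set of `p` vertices
results in a graph with a perfect matching. -/
def PFactorCritical (G : SimpleGraph V) (p : ℕ) : Prop :=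
  ∀ X : Set V, X.ncard = p → ∃ M : (G.induce Xᶜ).Subgraph, M.IsPerfectMatching

/-- A graph is factor-critical if the removal of any single vertex results in a
graph with a perfect matching. -/
def IsFactorCritical {W : Type*} (H : SimpleGraph W) : Prop :=
  ∀ v : W, ∃ M : (H.induce ({v}ᶜ : Set W)).Subgraph, M.IsPerfectMatching

/-- `∇(X)`: the set of edges of `G` with exactly one end in `X`. -/
def edgeBoundary (G : SimpleGraph V) (X : Set V) : Set (Sym2 V) :=
  {e | e ∈ G.edgeSet ∧ ∃ x ∈ X, ∃ y ∈ Xᶜ, e = s(x, y)}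

/-- The set of edges of `G` with both ends in `X`. -/
def edgesWithin (G : SimpleGraph V) (X : Set V) : Set (Sym2 V) :=
  {e | e ∈ G.edgeSet ∧ ∀ v ∈ e, v ∈ X}

/-- The set of edges of `G` with one end in `A` and the other end in `S \ A`
(i.e. the edge boundary of `A` inside the induced subgraph `G[S]` when `A ⊆ S`). -/
def inducedEdgeBoundary (G : SimpleGraph V) (S A : Set V) : Set (Sym2 V) :=
  {e | e ∈ G.edgeSet ∧ ∃ x ∈ A, ∃ y ∈ S \ A, e = s(x, y)}

/-- `F` is an `s`-restricted edge-cut of `G` if deleting `F` disconnects `G` and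
every component of `G − F` has at least `s` vertices. -/
def IsRestrictedEdgeCut (G : SimpleGraph V) (s : ℕ) (F : Set (Sym2 V)) : Prop :=
  F ⊆ G.edgeSet ∧ ¬ (G.deleteEdges F).Connected ∧
    ∀ c : (G.deleteEdges F).ConnectedComponent, s ≤ c.supp.ncard

/-- `λ_s(G)`: the minimum cardinality of an `s`-restricted edge-cut of `G`. -/
noncomputable def lambdaS (G : SimpleGraph V) (s : ℕ) : ℕ :=
  sInf (Set.ncard '' {F | IsRestrictedEdgeCut G s F})

/-- A `λ_s`-fragment: a vertex set whose edge boundary is an `s`-restricted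
edge-cut of minimum cardinality `λ_s(G)`. -/
def IsLambdaFragment (G : SimpleGraph V) (s : ℕ) (X : Set V) : Prop :=
  IsRestrictedEdgeCut G s (edgeBoundary G X) ∧ (edgeBoundary G X).ncard = lambdaS G s

/-- A `λ_s`-atom: a `λ_s`-fragment of minimum cardinality. -/
def IsLambdaAtom (G : SimpleGraph V) (s : ℕ) (X : Set V) : Prop :=
  IsLambdaFragment G s X ∧ ∀ Y : Set V, IsLambdaFragment G s Y → X.ncard ≤ Y.ncard

/-- The odd girth of `G`: the length of a shortest odd cycle of `G`. -/
noncomputable def oddGirth (G : SimpleGraph V) : ℕ :=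
  sInf {n | Odd n ∧ ∃ (v : V) (c : G.Walk v v), c.IsCycle ∧ c.length = n}

/-- `X` is an independent set of `G`. -/
def IsIndependentSet (G : SimpleGraph V) (X : Set V) : Prop :=
  ∀ x ∈ X, ∀ y ∈ X, ¬ G.Adj x y

/-- The independence number `α(G)`. -/
noncomputable def indepNum (G : SimpleGraph V) : ℕ :=
  sSup {n | ∃ X : Set V, IsIndependentSet G X ∧ X.ncard = n}

/-- The number of trivial (single-vertex) components of `G − X`. -/
noncomputable def trivialComponentCount (G : SimpleGraph V) (X : Set V) : ℕ :=
  {c : (G.induce Xᶜ).ConnectedComponent | c.supp.ncard = 1}.ncard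

/-- The number of odd components of `G − X`. -/
noncomputable def oddComponentCount (G : SimpleGraph V) (X : Set V) : ℕ :=
  {c : (G.induce Xᶜ).ConnectedComponent | Odd c.supp.ncard}.ncard

/-- The number of nontrivial components of `G − X`. -/
noncomputable def nontrivialComponentCount (G : SimpleGraph V) (X : Set V) : ℕ :=
  {c : (G.induce Xᶜ).ConnectedComponent | 2 ≤ c.supp.ncard}.ncard

/-- An imprimitive block of `G`: a proper non-empty vertex set that every
automorphism either fixes setwise or maps to a disjoint set. -/
def IsImprimitiveBlock (G : SimpleGraph V) (X : Set V) : Prop :=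
  X.Nonempty ∧ X ≠ Set.univ ∧ ∀ φ : G ≃g G, (⇑φ) '' X = X ∨ ((⇑φ) '' X) ∩ X = ∅

/-- A connected graph is `q`-extendable if it has a perfect matching and every
matching of size `q` is contained in a perfect matching. -/
def Extendable (G : SimpleGraph V) (q : ℕ) : Prop :=
  (∃ M : G.Subgraph, M.IsPerfectMatching) ∧
    ∀ M : G.Subgraph, M.IsMatching → M.edgeSet.ncard = q →
      ∃ P : G.Subgraph, P.IsPerfectMatching ∧ M ≤ P

end Defs


section Aux

open Finset

variable {V : Type*} {G : SimpleGraph V}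

lemma exists_arc {g : ℕ} [NeZero g] {f : ZMod g → V} (hadj : ∀ i, G.Adj (f i) (f (i + 1))) :
    ∀ (d : ℕ) (i : ZMod g), ∃ p : G.Walk (f i) (f (i + (d : ZMod g))),
      p.length = d ∧
      p.support = (List.range (d + 1)).map (fun t : ℕ => f (i + (t : ZMod g))) ∧
      p.edges = (List.range d).map (fun t : ℕ => s(f (i + (t : ZMod g)), f (i + (t : ZMod g) + 1))) := by
  intro d
  induction d with
  | zero =>
    intro i
    refine ⟨Walk.nil.copy rfl (by norm_num), ?_, ?_, ?_⟩
    · simp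
    · rw [Walk.support_copy, Walk.support_nil]
      rw [show List.range 1 = [0] from rfl, List.map_cons, List.map_nil]
      norm_num
    · simp
  | succ d ih =>
    intro i
    obtain ⟨p', hlen, hsupp, hedges⟩ := ih (i + 1)
    have hcast : f (i + 1 + (d : ZMod g)) = f (i + ((d + 1 : ℕ) : ZMod g)) := by
      congr 1
      push_cast
      ring
    refine ⟨(Walk.cons (hadj i) p').copy rfl hcast, ?_, ?_, ?_⟩
    · simp [hlen]
    · have harg : ∀ t : ℕ, i + 1 + (t : ZMod g) = i + ((t + 1 : ℕ) : ZMod g) := by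
        intro t; push_cast; ring
      rw [Walk.support_copy, Walk.support_cons, hsupp]
      conv_rhs => rw [List.range_succ_eq_map]
      rw [List.map_cons, List.map_map]
      congr 1
      · norm_num
      · apply List.map_congr_left
        intro t _
        simp only [Function.comp_apply]
        rw [harg t]
    · have harg : ∀ t : ℕ, i + 1 + (t : ZMod g) = i + ((t + 1 : ℕ) : ZMod g) := by
        intro t; push_cast; ring
      rw [Walk.edges_copy, Walk.edges_cons, hedges]
      conv_rhs => rw [List.range_succ_eq_map]
      rw [List.map_cons, List.map_map]
      congr 1
      · norm_num
      · apply List.map_congr_left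
        intro t _
        simp only [Function.comp_apply]
        rw [harg t]

lemma natCast_inj_of_lt {g t₁ t₂ : ℕ} [NeZero g] (h₁ : t₁ < g) (h₂ : t₂ < g)
    (h : (t₁ : ZMod g) = (t₂ : ZMod g)) : t₁ = t₂ := by
  have := congrArg ZMod.val h
  rwa [ZMod.val_natCast, ZMod.val_natCast, Nat.mod_eq_of_lt h₁, Nat.mod_eq_of_lt h₂] at this

lemma arc_isPath {g : ℕ} [NeZero g] {f : ZMod g → V} (hinj : Function.Injective f)
    {d : ℕ} (hd : d < g) {i : ZMod g} {p : G.Walk (f i) (f (i + (d : ZMod g)))}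
    (hsupp : p.support = (List.range (d + 1)).map (fun t : ℕ => f (i + (t : ZMod g)))) :
    p.IsPath := by
  rw [Walk.isPath_def, hsupp]
  apply List.Nodup.map_on _ List.nodup_range
  intro t₁ h₁ t₂ h₂ h
  rw [List.mem_range] at h₁ h₂
  exact natCast_inj_of_lt (by omega) (by omega) (add_left_cancel (hinj h))

lemma chord_cycle {g : ℕ} [NeZero g] {f : ZMod g → V}
    (hinj : Function.Injective f) (hadj : ∀ i, G.Adj (f i) (f (i + 1)))
    (i : ZMod g) (d : ℕ) (hd2 : 2 ≤ d) (hdg : d ≤ g - 2)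
    (h : G.Adj (f (i + (d : ZMod g))) (f i)) :
    ∃ (u : V) (q : G.Walk u u), q.IsCycle ∧ q.length = d + 1 := by
  have hg : 0 < g := Nat.pos_of_ne_zero (NeZero.ne g)
  have hdg' : d < g := by omega
  obtain ⟨p, hlen, hsupp, hedges⟩ := exists_arc hadj d i
  have hpath : p.IsPath := arc_isPath hinj hdg' hsupp
  refine ⟨f (i + (d : ZMod g)), Walk.cons h p, ?_, ?_⟩
  · rw [Walk.cons_isCycle_iff]
    refine ⟨hpath, ?_⟩
    rw [hedges]
    intro hmem
    rw [List.mem_map] at hmem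
    obtain ⟨t, htr, hts⟩ := hmem
    rw [List.mem_range] at htr
    rw [Sym2.eq_iff] at hts
    rcases hts with ⟨h1, h2⟩ | ⟨h1, h2⟩
    · -- f (i+t) = f (i+d) and f (i+t+1) = f i
      have e1 : (t : ZMod g) = (d : ZMod g) := add_left_cancel (hinj h1)
      have : t = d := natCast_inj_of_lt (by omega) hdg' e1
      omega
    · -- f (i+t) = f i and f (i+t+1) = f (i+d)
      have e1 : (t : ZMod g) = ((0 : ℕ) : ZMod g) := by
        have h := add_eq_left.mp (hinj h1)
        rw [h]; norm_num
      have ht0 : t = 0 := natCast_inj_of_lt (by omega) hg e1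
      have e2 : ((t + 1 : ℕ) : ZMod g) = (d : ZMod g) := by
        have h := hinj h2
        have h' : i + ((t : ZMod g) + 1) = i + (d : ZMod g) := by
          rw [← add_assoc]; exact h
        push_cast
        exact add_left_cancel h'
      have : t + 1 = d := natCast_inj_of_lt (by omega) hdg' e2
      omega
  · simp [hlen]

lemma ear_cycle {g : ℕ} [NeZero g] {f : ZMod g → V}
    (hinj : Function.Injective f) (hadj : ∀ i, G.Adj (f i) (f (i + 1)))
    {w : V} (hw : ∀ t, w ≠ f t)
    (i : ZMod g) (d : ℕ) (hd1 : 1 ≤ d) (hdg : d ≤ g - 1)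
    (h1 : G.Adj w (f i)) (h2 : G.Adj w (f (i + (d : ZMod g)))) :
    ∃ (u : V) (q : G.Walk u u), q.IsCycle ∧ q.length = d + 2 := by
  have hg : 0 < g := Nat.pos_of_ne_zero (NeZero.ne g)
  have hdg' : d < g := by omega
  obtain ⟨p, hlen, hsupp, hedges⟩ := exists_arc hadj d i
  have hpath : p.IsPath := arc_isPath hinj hdg' hsupp
  have hwns : w ∉ p.support := by
    rw [hsupp]
    intro hmem
    rw [List.mem_map] at hmem
    obtain ⟨t, _, hts⟩ := hmem
    exact hw _ hts.symm
  set q : G.Walk (f i) w := p.concat h2.symm with hqdef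
  have hqpath : q.IsPath := by
    rw [Walk.isPath_def, hqdef, Walk.support_concat]
    rw [List.nodup_append]
    refine ⟨hpath.support_nodup, List.nodup_singleton w, ?_⟩
    intro a ha b hb
    rw [List.mem_singleton] at hb
    subst hb
    rintro rfl
    exact hwns ha
  refine ⟨w, Walk.cons h1 q, ?_, ?_⟩
  · rw [Walk.cons_isCycle_iff]
    refine ⟨hqpath, ?_⟩
    rw [hqdef, Walk.edges_concat, List.concat_eq_append, List.mem_append]
    rintro (hmem | hmem)
    · rw [hedges, List.mem_map] at hmem
      obtain ⟨t, _, hts⟩ := hmem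
      rw [Sym2.eq_iff] at hts
      rcases hts with ⟨ha, _⟩ | ⟨_, hb⟩
      · exact hw _ ha.symm
      · exact hw _ hb.symm
    · rw [List.mem_singleton, Sym2.eq_iff] at hmem
      rcases hmem with ⟨ha, _⟩ | ⟨ha, hb⟩
      · exact hw _ ha
      · -- w = w and f i = f (i + d)
        have h0 : (d : ZMod g) = 0 := add_eq_left.mp (hinj hb).symm
        have : d = 0 := natCast_inj_of_lt hdg' hg (by rw [h0]; norm_num)
        omega
  · rw [Walk.length_cons, hqdef, Walk.length_concat, hlen]

lemma nbrs_le_two [Fintype V] [DecidableEq V] [DecidableRel G.Adj] {g : ℕ}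
    (hg5 : 5 ≤ g) (hodd : Odd g) [NeZero g]
    {f : ZMod g → V} (hinj : Function.Injective f) (hadj : ∀ i, G.Adj (f i) (f (i + 1)))
    (hmin : ∀ n, Odd n → (∃ (u : V) (q : G.Walk u u), q.IsCycle ∧ q.length = n) → g ≤ n)
    (w : V) : ((Finset.univ.image f).filter (fun x => G.Adj w x)).card ≤ 2 := by
  classical
  have hg0 : 0 < g := by omega
  have hg2 : g % 2 = 1 := Nat.odd_iff.mp hodd
  have hcastg1 : ((g - 1 : ℕ) : ZMod g) = -1 := by
    rw [Nat.cast_sub (by omega : 1 ≤ g), ZMod.natCast_self]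
    ring
  have hcastg2 : ((g - 2 : ℕ) : ZMod g) = -2 := by
    rw [Nat.cast_sub (by omega : 2 ≤ g), ZMod.natCast_self]
    push_cast
    ring
  by_cases hwC : ∃ m, w = f m
  · obtain ⟨m, rfl⟩ := hwC
    have hsub : (Finset.univ.image f).filter (fun x => G.Adj (f m) x)
        ⊆ {f (m + 1), f (m - 1)} := by
      intro x hx
      rw [Finset.mem_filter] at hx
      obtain ⟨hxim, hadjx⟩ := hx
      obtain ⟨j, _, rfl⟩ := Finset.mem_image.mp hxim
      by_contra hcon
      rw [Finset.mem_insert, Finset.mem_singleton] at hcon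
      push_neg at hcon
      obtain ⟨hj1, hj2⟩ := hcon
      have hjm : j ≠ m := by
        intro h; subst h; exact G.irrefl hadjx
      set d := (j - m).val with hddef
      have hdne : j - m ≠ 0 := sub_ne_zero.mpr (Ne.symm hjm).symm
      have hd1 : 1 ≤ d := by
        rcases Nat.eq_zero_or_pos d with h | h
        · exact absurd ((ZMod.val_eq_zero _).mp h) hdne
        · exact h
      have hdlt : d < g := ZMod.val_lt _
      have hjd : j = m + (d : ZMod g) := by
        rw [hddef, ZMod.natCast_zmod_val]; ring
      have hdne1 : d ≠ 1 := by
        intro h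
        apply hj1
        congr 1
        rw [hjd, h]; norm_num
      have hdneg1 : d ≠ g - 1 := by
        intro h
        apply hj2
        congr 1
        rw [hjd, h, hcastg1]; ring
      have hch1 := chord_cycle hinj hadj m d (by omega) (by omega)
        (by rw [← hjd]; exact hadjx.symm)
      have harg : m = j + ((g - d : ℕ) : ZMod g) := by
        rw [Nat.cast_sub (le_of_lt hdlt), ZMod.natCast_self, hjd]; ring
      have hch2 := chord_cycle hinj hadj j (g - d) (by omega) (by omega)
        (by rw [← harg]; exact hadjx)
      rcases Nat.even_or_odd d with hev | hod
      · have hO : Odd (d + 1) := by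
          rw [Nat.odd_iff]
          have := Nat.even_iff.mp hev
          omega
        have := hmin _ hO hch1
        omega
      · have hO : Odd (g - d + 1) := by
          rw [Nat.odd_iff]
          have := Nat.odd_iff.mp hod
          omega
        have := hmin _ hO hch2
        omega
    calc ((Finset.univ.image f).filter (fun x => G.Adj (f m) x)).card
        ≤ ({f (m + 1), f (m - 1)} : Finset V).card := Finset.card_le_card hsub
      _ ≤ 2 := by
        apply le_trans (Finset.card_insert_le _ _)
        simp
  · push_neg at hwC
    have pair : ∀ i j : ZMod g, i ≠ j → G.Adj w (f i) → G.Adj w (f j) →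
        ((j - i).val = 2 ∨ (j - i).val = g - 2) := by
      intro i j hne h1 h2
      set d := (j - i).val with hddef
      have hdne : j - i ≠ 0 := sub_ne_zero.mpr (Ne.symm hne)
      have hd1 : 1 ≤ d := by
        rcases Nat.eq_zero_or_pos d with h | h
        · exact absurd ((ZMod.val_eq_zero _).mp h) hdne
        · exact h
      have hdlt : d < g := ZMod.val_lt _
      have hjd : j = i + (d : ZMod g) := by
        rw [hddef, ZMod.natCast_zmod_val]; ring
      rcases Nat.even_or_odd d with hev | hod
      · -- d even, use ear from j with g - d
        have harg : i = j + ((g - d : ℕ) : ZMod g) := by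
          rw [Nat.cast_sub (le_of_lt hdlt), ZMod.natCast_self, hjd]; ring
        have hear := ear_cycle hinj hadj hwC j (g - d) (by omega) (by omega)
          h2 (by rw [← harg]; exact h1)
        have hO : Odd (g - d + 2) := by
          rw [Nat.odd_iff]
          have := Nat.even_iff.mp hev
          omega
        have := hmin _ hO hear
        have hd2 : d = 2 := by
          have := Nat.even_iff.mp hev
          omega
        left; omega
      · -- d odd, use ear from i with d
        have hear := ear_cycle hinj hadj hwC i d (by omega) (by omega)
          h1 (by rw [← hjd]; exact h2)
        have hO : Odd (d + 2) := by
          rw [Nat.odd_iff]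
          have := Nat.odd_iff.mp hod
          omega
        have := hmin _ hO hear
        have := Nat.odd_iff.mp hod
        right; omega
    by_contra hcon
    push_neg at hcon
    have h3 : 2 < ((Finset.univ.image f).filter (fun x => G.Adj w x)).card := hcon
    obtain ⟨x, hx, y, hy, z, hz, hxy, hxz, hyz⟩ := Finset.two_lt_card.mp h3
    rw [Finset.mem_filter] at hx hy hz
    obtain ⟨i, _, rfl⟩ := Finset.mem_image.mp hx.1
    obtain ⟨j, _, rfl⟩ := Finset.mem_image.mp hy.1
    obtain ⟨l, _, rfl⟩ := Finset.mem_image.mp hz.1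
    have hij : i ≠ j := fun h => hxy (by rw [h])
    have hil : i ≠ l := fun h => hxz (by rw [h])
    have hjl : j ≠ l := fun h => hyz (by rw [h])
    have p1 := pair i j hij hx.2 hy.2
    have p2 := pair j l hjl hy.2 hz.2
    have p3 := pair i l hil hx.2 hz.2
    have hrel : (l - i).val = ((j - i).val + (l - j).val) % g := by
      conv_lhs => rw [show l - i = (j - i) + (l - j) from by ring]
      rw [ZMod.val_add]
    have ha : (j - i).val < g := ZMod.val_lt _
    have hb : (l - j).val < g := ZMod.val_lt _
    have hsplit : (l - i).val = (j - i).val + (l - j).val ∨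
        (g ≤ (j - i).val + (l - j).val ∧
          (l - i).val = (j - i).val + (l - j).val - g) := by
      rcases Nat.lt_or_ge ((j - i).val + (l - j).val) g with h | h
      · left; rw [hrel, Nat.mod_eq_of_lt h]
      · right
        refine ⟨h, ?_⟩
        rw [hrel, Nat.mod_eq_sub_mod h, Nat.mod_eq_of_lt (by omega)]
    omega

lemma indep_bound [Fintype V] [DecidableEq V] {g : ℕ} [NeZero g]
    {f : ZMod g → V} (hinj : Function.Injective f)
    (hadj : ∀ i, G.Adj (f i) (f (i + 1))) {S : Finset V}
    (hS : ∀ x ∈ S, ∀ y ∈ S, ¬ G.Adj x y) :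
    2 * ((Finset.univ.image f) ∩ S).card ≤ g := by
  classical
  set I : Finset (ZMod g) := Finset.univ.filter (fun i => f i ∈ S) with hIdef
  have hcard : ((Finset.univ.image f) ∩ S).card = I.card := by
    have himg : (Finset.univ.image f) ∩ S = I.image f := by
      ext x
      constructor
      · intro hx
        rw [Finset.mem_inter] at hx
        obtain ⟨hx1, hx2⟩ := hx
        obtain ⟨i, _, rfl⟩ := Finset.mem_image.mp hx1
        exact Finset.mem_image.mpr ⟨i, Finset.mem_filter.mpr ⟨Finset.mem_univ _, hx2⟩, rfl⟩
      · intro hx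
        obtain ⟨i, hi, rfl⟩ := Finset.mem_image.mp hx
        rw [hIdef, Finset.mem_filter] at hi
        exact Finset.mem_inter.mpr ⟨Finset.mem_image.mpr ⟨i, Finset.mem_univ _, rfl⟩, hi.2⟩
    rw [himg, Finset.card_image_of_injective _ hinj]
  have hdisj : Disjoint I (I.image (· + 1)) := by
    rw [Finset.disjoint_left]
    intro j hj hj'
    obtain ⟨i, hi, rfl⟩ := Finset.mem_image.mp hj'
    rw [hIdef, Finset.mem_filter] at hi hj
    exact hS _ hi.2 _ hj.2 (hadj i)
  have himgcard : (I.image (· + 1)).card = I.card :=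
    Finset.card_image_of_injective _ (add_left_injective 1)
  have := Finset.card_union_of_disjoint hdisj
  have hle : (I ∪ I.image (· + 1)).card ≤ Fintype.card (ZMod g) := Finset.card_le_univ _
  rw [this, himgcard] at hle
  rw [ZMod.card] at hle
  omega


variable [Fintype V] [DecidableEq V]

lemma cycle_labeling {g : ℕ} [NeZero g] {v : V} (c : G.Walk v v) (hc : c.IsCycle)
    (hlen : c.length = g) :
    ∃ f : ZMod g → V, Function.Injective f ∧ (∀ i, G.Adj (f i) (f (i + 1))) ∧
      (∀ x, x ∈ c.support ↔ ∃ i, f i = x) := by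
  classical
  have hg : 0 < g := Nat.pos_of_ne_zero (NeZero.ne g)
  set L : List V := c.support.tail with hLdef
  have hLlen : L.length = g := by
    rw [hLdef, List.length_tail, c.length_support, hlen]
    omega
  have hLnodup : L.Nodup := hc.support_nodup
  have hsupp : c.support = v :: L := by
    rw [hLdef]; exact c.support_eq_cons
  -- last element of L is v
  have hLlast : L.get ⟨g - 1, by rw [hLlen]; omega⟩ = v := by
    have h1 := c.getLast_support
    rw [List.getLast_eq_getElem] at h1
    have hslen : c.support.length = g + 1 := by rw [c.length_support, hlen]
    have h2 : c.support[g]'(by omega) = v := by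
      convert h1 using 2
      omega
    have h3 : L[g-1]'(by rw [hLlen]; omega) = c.support[g]'(by omega) := by
      simp only [hLdef, List.getElem_tail]
      congr 1
      omega
    rw [List.get_eq_getElem, h3]
    exact h2
  set f : ZMod g → V := fun i => L.get ⟨i.val, by rw [hLlen]; exact i.val_lt⟩ with hfdef
  have hinj : Function.Injective f := by
    intro i j h
    have := List.nodup_iff_injective_get.mp hLnodup h
    have hval : i.val = j.val := congrArg Fin.val this
    calc i = ((i.val : ℕ) : ZMod g) := (ZMod.natCast_zmod_val i).symm
      _ = ((j.val : ℕ) : ZMod g) := by rw [hval]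
      _ = j := ZMod.natCast_zmod_val j
  have hchain : List.Chain G.Adj v L := by
    have := c.isChain_adj_support
    rwa [hsupp] at this
  have hchain' : (∀ h : 0 < L.length, G.Adj v (L.get ⟨0, h⟩)) ∧
      ∀ (i : ℕ) (h : i < L.length - 1),
        G.Adj (L.get ⟨i, by omega⟩) (L.get ⟨i+1, by omega⟩) := by
    have hc := List.isChain_iff_getElem.mp (show List.IsChain G.Adj (v :: L) from hchain)
    exact ⟨fun h => by simpa using hc 0 (by simp; omega),
      fun i h => by
        have := hc (i+1) (by simp; omega)
        simp only [List.getElem_cons_succ] at this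
        simpa using this⟩
  refine ⟨f, hinj, ?_, ?_⟩
  · intro i
    rcases Nat.lt_or_ge (i.val + 1) g with h | h
    · have hval : (i + 1).val = i.val + 1 := by
        have : ((i.val + 1 : ℕ) : ZMod g) = i + 1 := by
          push_cast [ZMod.natCast_zmod_val]; ring
        rw [← this, ZMod.val_natCast, Nat.mod_eq_of_lt h]
      have := hchain'.2 i.val (by rw [hLlen]; omega)
      convert this using 2
      exact Fin.mk_eq_mk.mpr hval
    · -- i.val = g - 1, wraps around
      have hival : i.val = g - 1 := by have := i.val_lt; omega
      have hval0 : (i + 1).val = 0 := by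
        have : ((i.val + 1 : ℕ) : ZMod g) = i + 1 := by
          push_cast [ZMod.natCast_zmod_val]; ring
        rw [← this, ZMod.val_natCast, hival]
        have : g - 1 + 1 = g := by omega
        rw [this, Nat.mod_self]
      have hfi : f i = v := by
        rw [hfdef]
        simp only
        rw [← hLlast]
        congr 1
        exact Fin.mk_eq_mk.mpr hival
      have hf0 : f (i + 1) = L.get ⟨0, by rw [hLlen]; omega⟩ := by
        rw [hfdef]; simp only; congr 1
        simp [hval0]
      rw [hfi, hf0]
      exact hchain'.1 (by rw [hLlen]; omega)
  · intro x
    rw [hsupp]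
    constructor
    · intro hx
      rcases List.mem_cons.mp hx with rfl | hx
      · refine ⟨((g - 1 : ℕ) : ZMod g), ?_⟩
        rw [hfdef]; simp only
        rw [← hLlast]
        congr 1
        exact Fin.mk_eq_mk.mpr (by
          rw [ZMod.val_natCast, Nat.mod_eq_of_lt (by omega : g - 1 < g)])
      · obtain ⟨⟨t, ht⟩, rfl⟩ := List.mem_iff_get.mp hx
        refine ⟨((t : ℕ) : ZMod g), ?_⟩
        rw [hfdef]; simp only
        congr 1
        exact Fin.mk_eq_mk.mpr (by
          rw [ZMod.val_natCast, Nat.mod_eq_of_lt (by rw [hLlen] at ht; exact ht)])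
    · rintro ⟨i, rfl⟩
      exact List.mem_cons_of_mem _ (List.get_mem _ _)


lemma averaging (hvt : VertexTransitive G) (C S : Finset V) (b : ℕ)
    (hb : ∀ φ : G ≃g G, ((C.image (φ : V → V)) ∩ S).card ≤ b) :
    C.card * S.card ≤ Fintype.card V * b := by
  classical
  haveI : Finite (G ≃g G) := by
    apply Finite.of_injective (fun φ : G ≃g G => (φ : V ≃ V))
    intro a b h
    ext x
    exact congrArg (fun e : V ≃ V => e x) h
  haveI : Fintype (G ≃g G) := Fintype.ofFinite _
  set A : Finset (G ≃g G) := Finset.univ with hA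
  -- fiber counts are constant
  have hconst : ∀ (x s t : V),
      (A.filter (fun φ => φ x = s)).card = (A.filter (fun φ => φ x = t)).card := by
    intro x s t
    obtain ⟨ψ, hψ⟩ := hvt s t
    apply Finset.card_bij (fun φ _ => φ.trans ψ)
    · intro φ hφ
      simp only [Finset.mem_filter, Finset.mem_univ, true_and] at hφ ⊢
      exact ⟨Finset.mem_univ _, by simp [RelIso.trans_apply, hφ.2, hψ]⟩
    · intro φ₁ h₁ φ₂ h₂ h
      have : ∀ x, φ₁ x = φ₂ x := by
        intro x
        have := congrArg (fun e : G ≃g G => ψ.symm (e x)) h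
        simpa using this
      ext x; exact this x
    · intro τ hτ
      simp only [Finset.mem_filter, Finset.mem_univ, true_and] at hτ
      refine ⟨τ.trans ψ.symm, ?_, ?_⟩
      · simp only [Finset.mem_filter, Finset.mem_univ, true_and, RelIso.trans_apply, hτ.2, ← hψ]
        exact ⟨Finset.mem_univ _, ψ.symm_apply_apply s⟩
      · ext x; simp [RelIso.trans_apply]
  have hfib : ∀ (x s : V),
      Fintype.card V * (A.filter (fun φ => φ x = s)).card = A.card := by
    intro x s
    have h1 : A.card = ∑ t : V, (A.filter (fun φ => φ x = t)).card :=
      Finset.card_eq_sum_card_fiberwise (fun φ _ => Finset.mem_univ (φ x))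
    have h2 : ∀ t : V, (A.filter (fun φ => φ x = t)).card
        = (A.filter (fun φ => φ x = s)).card := fun t => hconst x t s
    rw [h1, Finset.sum_congr rfl (fun t _ => h2 t), Finset.sum_const, smul_eq_mul]
    rfl
  -- main count
  have key : ∀ φ : G ≃g G, ((C.image (φ : V → V)) ∩ S).card
      = ∑ x ∈ C, (if φ x ∈ S then 1 else 0) := by
    intro φ
    have himg : (C.image (φ : V → V)) ∩ S = (C.filter (fun x => φ x ∈ S)).image (φ : V → V) := by
      ext y
      simp only [Finset.mem_inter, Finset.mem_image, Finset.mem_filter]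
      constructor
      · rintro ⟨⟨x, hx, rfl⟩, hy⟩; exact ⟨x, ⟨hx, hy⟩, rfl⟩
      · rintro ⟨x, ⟨hx, hxS⟩, rfl⟩; exact ⟨⟨x, hx, rfl⟩, hxS⟩
    rw [himg, Finset.card_image_of_injective _ (RelIso.injective φ), Finset.card_filter]
  have swap : ∑ φ : G ≃g G, ((C.image (φ : V → V)) ∩ S).card
      = ∑ x ∈ C, ∑ s ∈ S, (A.filter (fun φ => φ x = s)).card := by
    calc ∑ φ : G ≃g G, ((C.image (φ : V → V)) ∩ S).card
        = ∑ φ ∈ A, ∑ x ∈ C, (if φ x ∈ S then 1 else 0) := by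
          exact Finset.sum_congr rfl (fun φ _ => key φ)
      _ = ∑ x ∈ C, ∑ φ ∈ A, (if φ x ∈ S then 1 else 0) := Finset.sum_comm
      _ = ∑ x ∈ C, (A.filter (fun φ => φ x ∈ S)).card := by
          refine Finset.sum_congr rfl (fun x _ => ?_)
          rw [Finset.card_filter]
      _ = ∑ x ∈ C, ∑ s ∈ S, (A.filter (fun φ => φ x = s)).card := by
          refine Finset.sum_congr rfl (fun x _ => ?_)
          have := Finset.card_eq_sum_card_fiberwise
            (f := fun φ : G ≃g G => φ x) (s := A.filter (fun φ => φ x ∈ S)) (t := S)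
            (fun φ hφ => (Finset.mem_filter.mp hφ).2)
          rw [this]
          refine Finset.sum_congr rfl (fun s hs => ?_)
          congr 1
          rw [Finset.filter_filter]
          ext φ
          simp only [Finset.mem_filter]
          constructor
          · rintro ⟨h1, _, h3⟩; exact ⟨h1, h3⟩
          · rintro ⟨h1, h3⟩; exact ⟨h1, h3 ▸ hs, h3⟩
  have upper : ∑ φ : G ≃g G, ((C.image (φ : V → V)) ∩ S).card ≤ A.card * b := by
    calc ∑ φ : G ≃g G, ((C.image (φ : V → V)) ∩ S).card
        ≤ ∑ _φ : G ≃g G, b := Finset.sum_le_sum (fun φ _ => hb φ)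
      _ = A.card * b := by rw [Finset.sum_const, smul_eq_mul]
  have main : Fintype.card V * ∑ φ : G ≃g G, ((C.image (φ : V → V)) ∩ S).card
      = C.card * S.card * A.card := by
    rw [swap, Finset.mul_sum]
    have : ∀ x ∈ C, Fintype.card V * ∑ s ∈ S, (A.filter (fun φ => φ x = s)).card
        = S.card * A.card := by
      intro x _
      rw [Finset.mul_sum]
      rw [Finset.sum_congr rfl (fun s _ => hfib x s), Finset.sum_const, smul_eq_mul]
    rw [Finset.sum_congr rfl this, Finset.sum_const, smul_eq_mul]
    ring
  have hApos : 0 < A.card := by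
    rw [Finset.card_pos]
    exact ⟨RelIso.refl _, Finset.mem_univ _⟩
  have : C.card * S.card * A.card ≤ Fintype.card V * (A.card * b) := by
    rw [← main]
    exact Nat.mul_le_mul_left _ upper
  have h' : C.card * S.card * A.card ≤ Fintype.card V * b * A.card := by
    calc C.card * S.card * A.card ≤ Fintype.card V * (A.card * b) := this
      _ = Fintype.card V * b * A.card := by ring
  exact Nat.le_of_mul_le_mul_right h' hApos

end Aux

/-- For a non-bipartite vertex-transitive `k`-regular graph `G`:
if the odd girth is at least 5 then `α(G) ≤ |V(G)|/2 − k/4`; if the odd girth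
equals 3 then `α(G) ≤ |V(G)|/3`. -/
theorem statement3 {V : Type*} [Fintype V] [DecidableEq V]
    (G : SimpleGraph V) [DecidableRel G.Adj] (k : ℕ)
    (hvt : VertexTransitive G) (hnb : ¬ G.Colorable 2)
    (hreg : G.IsRegularOfDegree k) :
    (5 ≤ oddGirth G → (_root_.indepNum G : ℚ) ≤ (Fintype.card V : ℚ) / 2 - (k : ℚ) / 4) ∧
    (oddGirth G = 3 → (_root_.indepNum G : ℚ) ≤ (Fintype.card V : ℚ) / 3) := by

  classical
  constructor
  · -- odd girth at least 5
    intro hg5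
    set g := oddGirth G with hgdef
    set n := Fintype.card V with hndef
    have hne : {m | Odd m ∧ ∃ (v : V) (c : G.Walk v v), c.IsCycle ∧ c.length = m}.Nonempty := by
      by_contra h
      rw [Set.not_nonempty_iff_eq_empty] at h
      have h0 : g = 0 := by
        rw [hgdef, oddGirth, h, Nat.sInf_empty]
      omega
    have hmem : Odd g ∧ ∃ (v : V) (c : G.Walk v v), c.IsCycle ∧ c.length = g :=
      Nat.sInf_mem hne
    obtain ⟨hodd, v, c, hcyc, hclen⟩ := hmem
    have hmin : ∀ m, Odd m → (∃ (u : V) (q : G.Walk u u), q.IsCycle ∧ q.length = m) →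
        g ≤ m := fun m h1 h2 => Nat.sInf_le ⟨h1, h2⟩
    haveI : NeZero g := ⟨by omega⟩
    obtain ⟨f, hinj, hadjf, _⟩ := cycle_labeling c hcyc hclen
    set C : Finset V := Finset.univ.image f with hCdef
    have hCcard : C.card = g := by
      rw [hCdef, Finset.card_image_of_injective _ hinj, Finset.card_univ, ZMod.card]
    -- maximum independent set
    obtain ⟨X, hXind, hXcard⟩ : ∃ X : Set V, IsIndependentSet G X ∧ X.ncard = _root_.indepNum G := by
      have hne' : {m | ∃ X : Set V, IsIndependentSet G X ∧ X.ncard = m}.Nonempty :=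
        ⟨0, ∅, fun x hx => absurd hx (Set.notMem_empty x), by simp⟩
      have hbdd : BddAbove {m | ∃ X : Set V, IsIndependentSet G X ∧ X.ncard = m} := by
        refine ⟨Fintype.card V, ?_⟩
        rintro m ⟨X, _, rfl⟩
        calc X.ncard ≤ (Set.univ : Set V).ncard :=
              Set.ncard_le_ncard (Set.subset_univ X) Set.finite_univ
          _ = Fintype.card V := by rw [Set.ncard_univ, Nat.card_eq_fintype_card]
      have := Nat.sSup_mem hne' hbdd
      exact this
    set S : Finset V := X.toFinset with hSdef
    have hScard : S.card = _root_.indepNum G := by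
      rw [Set.ncard_eq_toFinset_card'] at hXcard
      exact hXcard
    have hSind : ∀ x ∈ S, ∀ y ∈ S, ¬ G.Adj x y := fun x hx y hy =>
      hXind x (Set.mem_toFinset.mp hx) y (Set.mem_toFinset.mp hy)
    obtain ⟨mm, hm⟩ := hodd
    -- averaging bound
    have hbS : ∀ φ : G ≃g G, ((C.image (φ : V → V)) ∩ S).card ≤ mm := by
      intro φ
      have himg : C.image (φ : V → V) = Finset.univ.image ((φ : V → V) ∘ f) := by
        rw [hCdef, Finset.image_image]
      have hinj' : Function.Injective ((φ : V → V) ∘ f) := (RelIso.injective φ).comp hinj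
      have hadj' : ∀ i, G.Adj (((φ : V → V) ∘ f) i) (((φ : V → V) ∘ f) (i + 1)) := by
        intro i
        exact φ.map_adj_iff.mpr (hadjf i)
      have h2 := indep_bound hinj' hadj' hSind
      rw [himg]
      omega
    have havg := averaging hvt C S mm hbS
    rw [hCcard, hScard, ← hndef] at havg
    -- degree counting: g * k ≤ 2 * n
    have hdeg : g * k ≤ 2 * n := by
      have h1 : ∑ x ∈ C, (G.neighborFinset x).card
          = ∑ w : V, (C.filter (fun x => G.Adj w x)).card := by
        calc ∑ x ∈ C, (G.neighborFinset x).card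
            = ∑ x ∈ C, ∑ w : V, (if G.Adj x w then 1 else 0) := by
              refine Finset.sum_congr rfl (fun x _ => ?_)
              rw [neighborFinset_eq_filter, Finset.card_filter]
          _ = ∑ w : V, ∑ x ∈ C, (if G.Adj x w then 1 else 0) := Finset.sum_comm
          _ = ∑ w : V, (C.filter (fun x => G.Adj w x)).card := by
              refine Finset.sum_congr rfl (fun w _ => ?_)
              rw [Finset.card_filter]
              refine Finset.sum_congr rfl (fun x _ => ?_)
              simp only [G.adj_comm]
      have h2 : ∑ x ∈ C, (G.neighborFinset x).card = g * k := by
        have : ∀ x ∈ C, (G.neighborFinset x).card = k := fun x _ => hreg x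
        rw [Finset.sum_congr rfl this, Finset.sum_const, smul_eq_mul, hCcard]
      have h3 : ∑ w : V, (C.filter (fun x => G.Adj w x)).card ≤ ∑ _w : V, 2 :=
        Finset.sum_le_sum (fun w _ =>
          nbrs_le_two hg5 ⟨mm, hm⟩ hinj hadjf hmin w)
      rw [h1] at h2
      rw [Finset.sum_const, smul_eq_mul, Finset.card_univ, ← hndef] at h3
      omega
    -- combine
    have hkey : g * (4 * _root_.indepNum G + k) ≤ g * (2 * n) := by
      have h4 : 4 * (g * _root_.indepNum G) ≤ 4 * (n * mm) :=
        Nat.mul_le_mul_left 4 havg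
      have heq : 4 * (n * mm) + 2 * n = g * (2 * n) := by
        rw [hm]; ring
      calc g * (4 * _root_.indepNum G + k) = 4 * (g * _root_.indepNum G) + g * k := by ring
        _ ≤ 4 * (n * mm) + 2 * n := Nat.add_le_add h4 hdeg
        _ = g * (2 * n) := heq
    have hcancel : 4 * _root_.indepNum G + k ≤ 2 * n :=
      Nat.le_of_mul_le_mul_left hkey (by omega)
    have hQ : (4 * _root_.indepNum G + k : ℚ) ≤ 2 * n := by exact_mod_cast hcancel
    rw [hndef] at hQ
    linarith
  · -- odd girth equal to 3
    intro hg3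
    have hne : {m | Odd m ∧ ∃ (v : V) (c : G.Walk v v), c.IsCycle ∧ c.length = m}.Nonempty := by
      by_contra h
      rw [Set.not_nonempty_iff_eq_empty] at h
      have h0 : oddGirth G = 0 := by
        rw [oddGirth, h, Nat.sInf_empty]
      omega
    have hmem : Odd (oddGirth G) ∧
        ∃ (v : V) (c : G.Walk v v), c.IsCycle ∧ c.length = oddGirth G :=
      Nat.sInf_mem hne
    rw [hg3] at hmem
    obtain ⟨-, v, c, _, hclen⟩ := hmem
    obtain ⟨a, b, hva, hab, hbv⟩ : ∃ a b, G.Adj v a ∧ G.Adj a b ∧ G.Adj b v := by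
      cases c with
      | nil => simp at hclen
      | cons h p =>
        cases p with
        | nil => simp at hclen
        | cons h2 p2 =>
          cases p2 with
          | nil => simp at hclen
          | cons h3 p3 =>
            cases p3 with
            | nil => exact ⟨_, _, h, h2, h3⟩
            | cons h4 p4 =>
              simp only [Walk.length_cons] at hclen
              omega
    -- maximum independent set
    obtain ⟨X, hXind, hXcard⟩ : ∃ X : Set V, IsIndependentSet G X ∧ X.ncard = _root_.indepNum G := by
      have hne' : {m | ∃ X : Set V, IsIndependentSet G X ∧ X.ncard = m}.Nonempty :=
        ⟨0, ∅, fun x hx => absurd hx (Set.notMem_empty x), by simp⟩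
      have hbdd : BddAbove {m | ∃ X : Set V, IsIndependentSet G X ∧ X.ncard = m} := by
        refine ⟨Fintype.card V, ?_⟩
        rintro m ⟨X, _, rfl⟩
        calc X.ncard ≤ (Set.univ : Set V).ncard :=
              Set.ncard_le_ncard (Set.subset_univ X) Set.finite_univ
          _ = Fintype.card V := by rw [Set.ncard_univ, Nat.card_eq_fintype_card]
      exact Nat.sSup_mem hne' hbdd
    set S : Finset V := X.toFinset with hSdef
    have hScard : S.card = _root_.indepNum G := by
      rw [Set.ncard_eq_toFinset_card'] at hXcard
      exact hXcard
    have hSind : ∀ x ∈ S, ∀ y ∈ S, ¬ G.Adj x y := fun x hx y hy =>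
      hXind x (Set.mem_toFinset.mp hx) y (Set.mem_toFinset.mp hy)
    set C : Finset V := {v, a, b} with hCdef
    have hCcard : C.card = 3 := by
      rw [hCdef, Finset.card_insert_of_notMem, Finset.card_insert_of_notMem,
        Finset.card_singleton]
      · simp [hab.ne]
      · simp only [Finset.mem_insert, Finset.mem_singleton]
        push_neg
        exact ⟨hva.ne, hbv.ne.symm⟩
    have hpair : ∀ p ∈ C, ∀ q ∈ C, p ≠ q → G.Adj p q := by
      intro p hp q hq hpq
      rw [hCdef] at hp hq
      simp only [Finset.mem_insert, Finset.mem_singleton] at hp hq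
      rcases hp with rfl | rfl | rfl <;> rcases hq with rfl | rfl | rfl <;>
        first
          | exact absurd rfl hpq
          | exact hva
          | exact hab
          | exact hbv
          | exact hva.symm
          | exact hab.symm
          | exact hbv.symm
    have hbS : ∀ φ : G ≃g G, ((C.image (φ : V → V)) ∩ S).card ≤ 1 := by
      intro φ
      rw [Finset.card_le_one]
      intro x hx y hy
      by_contra hne'
      rw [Finset.mem_inter] at hx hy
      obtain ⟨p, hp, rfl⟩ := Finset.mem_image.mp hx.1
      obtain ⟨q, hq, rfl⟩ := Finset.mem_image.mp hy.1
      have hpq : p ≠ q := fun h => hne' (by rw [h])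
      exact hSind _ hx.2 _ hy.2 (φ.map_adj_iff.mpr (hpair p hp q hq hpq))
    have havg := averaging hvt C S 1 hbS
    rw [hCcard, hScard, mul_one] at havg
    have hQ : (3 * _root_.indepNum G : ℚ) ≤ Fintype.card V := by exact_mod_cast havg
    linarith
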